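/- Let ((g,[2]),D) be a ResLieDer pair over F and assume that every 2-cocycle of ((g,[2]),D) with adjoint coefficients is a 2-coboundary. Then ((g,[2]),D) is rigid: for every 1-parameter formal deformation (μ_i, σ_i, D_i)_{i≥0} of ((g,[2]),D) there exists a family of F-linear maps π_i : g → g (i ≥ 0) with π₀ = id such that for every k ≥ 0 and all x,y ∈ g: Σ_{i+j=k} π_i(μ_j(x,y)) = Σ_{i+j=k} [π_i(x),π_j(y)]; Σ_{i+j=k} π_i(σ_j(x)) = Σ_{2i=k} (π_i(x))^[2] + Σ_{i<j, i+j=k} [π_i(x),π_j(x)]; Σ_{i+j=k} π_i(D_j(x)) = D(π_k(x)). -/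

import Mathlib

open Finset


section Infra

variable {M : Type*} [AddCommMonoid M]

lemma lie_sum' {L : Type*} [LieRing L] {ι : Type*} (u : L) (s : Finset ι) (f : ι → L) :
    ⁅u, ∑ i ∈ s, f i⁆ = ∑ i ∈ s, ⁅u, f i⁆ :=
  map_sum (AddMonoidHom.mk' (fun v => ⁅u, v⁆) (lie_add u)) f s

lemma sum_lie' {L : Type*} [LieRing L] {ι : Type*} (u : L) (s : Finset ι) (f : ι → L) :
    ⁅∑ i ∈ s, f i, u⁆ = ∑ i ∈ s, ⁅f i, u⁆ :=
  map_sum (AddMonoidHom.mk' (fun v => ⁅v, u⁆) (fun a b => add_lie a b u)) f s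

/-- cyclic permutation of a triple antidiagonal sum: outer index becomes the last slot. -/
lemma tri_cycle (k : ℕ) (F : ℕ → ℕ → ℕ → M) :
    (∑ p ∈ antidiagonal k, ∑ q ∈ antidiagonal p.2, F p.1 q.1 q.2) =
      ∑ p ∈ antidiagonal k, ∑ q ∈ antidiagonal p.2, F q.1 q.2 p.1 := by
  rw [Finset.sum_sigma' (antidiagonal k) (fun p => antidiagonal p.2)
      (fun p q => F p.1 q.1 q.2),
    Finset.sum_sigma' (antidiagonal k) (fun p => antidiagonal p.2)
      (fun p q => F q.1 q.2 p.1)]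
  refine Finset.sum_nbij' (fun t => ⟨(t.2.2, t.1.1 + t.2.1), (t.1.1, t.2.1)⟩)
    (fun t => ⟨(t.2.1, t.2.2 + t.1.1), (t.2.2, t.1.1)⟩) ?_ ?_ ?_ ?_ ?_
  · rintro ⟨⟨a, b⟩, ⟨c, d⟩⟩ ht
    simp only [Finset.mem_sigma, Finset.HasAntidiagonal.mem_antidiagonal, and_true] at ht ⊢
    omega
  · rintro ⟨⟨a, b⟩, ⟨c, d⟩⟩ ht
    simp only [Finset.mem_sigma, Finset.HasAntidiagonal.mem_antidiagonal, and_true] at ht ⊢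
    omega
  · rintro ⟨⟨a, b⟩, ⟨c, d⟩⟩ ht
    simp only [Finset.mem_sigma, Finset.HasAntidiagonal.mem_antidiagonal] at ht
    obtain ⟨h1, h2⟩ := ht
    subst h2 h1
    rfl
  · rintro ⟨⟨a, b⟩, ⟨c, d⟩⟩ ht
    simp only [Finset.mem_sigma, Finset.HasAntidiagonal.mem_antidiagonal] at ht
    obtain ⟨h1, h2⟩ := ht
    subst h2 h1
    rfl
  · rintro ⟨⟨a, b⟩, ⟨c, d⟩⟩ ht
    rfl

lemma tri_swap12 (k : ℕ) (F : ℕ → ℕ → ℕ → M) :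
    (∑ p ∈ antidiagonal k, ∑ q ∈ antidiagonal p.2, F p.1 q.1 q.2) =
      ∑ p ∈ antidiagonal k, ∑ q ∈ antidiagonal p.2, F q.1 p.1 q.2 := by
  rw [Finset.sum_sigma' (antidiagonal k) (fun p => antidiagonal p.2)
      (fun p q => F p.1 q.1 q.2),
    Finset.sum_sigma' (antidiagonal k) (fun p => antidiagonal p.2)
      (fun p q => F q.1 p.1 q.2)]
  refine Finset.sum_nbij' (fun t => ⟨(t.2.1, t.1.1 + t.2.2), (t.1.1, t.2.2)⟩)
    (fun t => ⟨(t.2.1, t.1.1 + t.2.2), (t.1.1, t.2.2)⟩) ?_ ?_ ?_ ?_ ?_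
  · rintro ⟨⟨a, b⟩, ⟨c, d⟩⟩ ht
    simp only [Finset.mem_sigma, Finset.HasAntidiagonal.mem_antidiagonal, and_true] at ht ⊢
    omega
  · rintro ⟨⟨a, b⟩, ⟨c, d⟩⟩ ht
    simp only [Finset.mem_sigma, Finset.HasAntidiagonal.mem_antidiagonal, and_true] at ht ⊢
    omega
  · rintro ⟨⟨a, b⟩, ⟨c, d⟩⟩ ht
    simp only [Finset.mem_sigma, Finset.HasAntidiagonal.mem_antidiagonal] at ht
    obtain ⟨h1, h2⟩ := ht
    subst h2 h1
    rfl
  · rintro ⟨⟨a, b⟩, ⟨c, d⟩⟩ ht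
    simp only [Finset.mem_sigma, Finset.HasAntidiagonal.mem_antidiagonal] at ht
    obtain ⟨h1, h2⟩ := ht
    subst h2 h1
    rfl
  · rintro ⟨⟨a, b⟩, ⟨c, d⟩⟩ ht
    rfl

/-- the remaining transposition: swap the last two slots. -/
lemma tri_swap23 (k : ℕ) (F : ℕ → ℕ → ℕ → M) :
    (∑ p ∈ antidiagonal k, ∑ q ∈ antidiagonal p.2, F p.1 q.1 q.2) =
      ∑ p ∈ antidiagonal k, ∑ q ∈ antidiagonal p.2, F p.1 q.2 q.1 := by
  refine Finset.sum_congr rfl fun p _ => ?_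
  rw [← Finset.Nat.sum_antidiagonal_swap (f := fun q => F p.1 q.1 q.2)]
  rfl

/-- inverse cyclic permutation. -/
lemma tri_cycle' (k : ℕ) (F : ℕ → ℕ → ℕ → M) :
    (∑ p ∈ antidiagonal k, ∑ q ∈ antidiagonal p.2, F p.1 q.1 q.2) =
      ∑ p ∈ antidiagonal k, ∑ q ∈ antidiagonal p.2, F q.2 p.1 q.1 := by
  have := tri_cycle k (fun i a b => F b i a)
  simpa using this.symm

/-- collapse: only the term `p = (0,k)` survives. -/
lemma sum_ad_ite_right (k : ℕ) (X : ℕ × ℕ → M) :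
    (∑ p ∈ antidiagonal k, if p.2 = k then X p else 0) = X (0, k) := by
  rw [Finset.sum_eq_single_of_mem (0, k) (by simp)]
  · simp
  · rintro ⟨a, b⟩ hb hne
    rw [Finset.HasAntidiagonal.mem_antidiagonal] at hb
    have hbk : ¬ b = k := by
      rintro rfl
      apply hne
      have : a = 0 := by omega
      subst this; rfl
    simp [hbk]

lemma sum_ad_ite_left (k : ℕ) (X : ℕ × ℕ → M) :
    (∑ p ∈ antidiagonal k, if p.1 = k then X p else 0) = X (k, 0) := by
  rw [Finset.sum_eq_single_of_mem (k, 0) (by simp)]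
  · simp
  · rintro ⟨a, b⟩ hb hne
    rw [Finset.HasAntidiagonal.mem_antidiagonal] at hb
    have hak : ¬ a = k := by
      rintro rfl
      apply hne
      have : b = 0 := by omega
      subst this; rfl
    simp [hak]

/-- split a sum over the antidiagonal into diagonal and strictly-ordered parts. -/
lemma prod_split (N k : ℕ) (hk : k ≤ N) (f : ℕ → ℕ → M) :
    (∑ p ∈ antidiagonal k, f p.1 p.2) =
      (∑ i ∈ range (N + 1), if 2 * i = k then f i i else 0) +
        ∑ i ∈ range (N + 1), ∑ j ∈ range (N + 1),
          if i < j ∧ i + j = k then (f i j + f j i) else 0 := by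
  have h1 : (∑ p ∈ antidiagonal k, f p.1 p.2) =
      ∑ i ∈ range (N + 1), ∑ j ∈ range (N + 1), if i + j = k then f i j else 0 := by
    rw [← Finset.sum_product', ← Finset.sum_filter]
    apply Finset.sum_congr _ (fun _ _ => rfl)
    ext ⟨a, b⟩
    simp only [Finset.HasAntidiagonal.mem_antidiagonal, Finset.mem_filter, Finset.mem_product,
      Finset.mem_range]
    omega
  have h2 : ∀ i j : ℕ, (if i + j = k then f i j else 0) =
      (if i = j ∧ i + j = k then f i i else 0) +
      ((if i < j ∧ i + j = k then f i j else 0) +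
       (if j < i ∧ i + j = k then f i j else 0)) := by
    intro i j
    rcases lt_trichotomy i j with h | h | h
    · have h' : ¬ (i = j ∧ i + j = k) := by omega
      have h'' : ¬ (j < i ∧ i + j = k) := by omega
      by_cases hij : i + j = k
      · rw [if_pos hij, if_neg h', if_pos ⟨h, hij⟩, if_neg h'']
        rw [zero_add, add_zero]
      · rw [if_neg hij, if_neg h', if_neg (by omega), if_neg h'']
        rw [zero_add, add_zero]
    · subst h
      have h'' : ¬ (i < i ∧ i + i = k) := by omega
      by_cases hij : i + i = k
      · rw [if_pos hij, if_pos ⟨rfl, hij⟩, if_neg h'']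
        rw [add_zero, add_zero]
      · rw [if_neg hij, if_neg (by omega), if_neg h'']
        rw [add_zero, add_zero]
    · have h' : ¬ (i = j ∧ i + j = k) := by omega
      have h'' : ¬ (i < j ∧ i + j = k) := by omega
      by_cases hij : i + j = k
      · rw [if_pos hij, if_neg h', if_neg h'', if_pos ⟨h, hij⟩]
        rw [zero_add, zero_add]
      · rw [if_neg hij, if_neg h', if_neg h'', if_neg (by omega)]
        rw [zero_add, zero_add]
  rw [h1]
  simp_rw [h2, Finset.sum_add_distrib]
  congr 1
  · refine Finset.sum_congr rfl fun i hi => ?_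
    rw [Finset.sum_eq_single i]
    · by_cases h : 2 * i = k
      · rw [if_pos (⟨rfl, by omega⟩ : i = i ∧ i + i = k), if_pos h]
      · rw [if_neg (by omega : ¬ (i = i ∧ i + i = k)), if_neg h]
    · intro j _ hj
      rw [if_neg (by omega : ¬ (i = j ∧ i + j = k))]
    · intro h
      exact absurd hi h
  · have h4 : (∑ i ∈ range (N + 1), ∑ j ∈ range (N + 1),
        if j < i ∧ i + j = k then f i j else 0)
        = ∑ i ∈ range (N + 1), ∑ j ∈ range (N + 1),
            if i < j ∧ i + j = k then f j i else 0 := by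
      rw [Finset.sum_comm]
      refine Finset.sum_congr rfl fun x _ => Finset.sum_congr rfl fun y _ => ?_
      exact if_congr (by omega) rfl rfl
    rw [h4, ← Finset.sum_add_distrib]
    refine Finset.sum_congr rfl fun i _ => ?_
    rw [← Finset.sum_add_distrib]
    refine Finset.sum_congr rfl fun j _ => ?_
    by_cases hc : i < j ∧ i + j = k
    · rw [if_pos hc, if_pos hc, if_pos hc]
    · rw [if_neg hc, if_neg hc, if_neg hc, add_zero]

end Infra


lemma two_zero (F : Type*) [Field F] [CharP F 2] {g : Type*} [LieRing g]
    [LieAlgebra F g] (v : g) : v + v = 0 := by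
  have h2 : (2 : F) = 0 := by exact_mod_cast CharP.cast_eq_zero F 2
  calc v + v = (2 : F) • v := (two_smul F v).symm
    _ = 0 := by rw [h2, zero_smul]

section C2

variable {g : Type*} [AddCommGroup g] (h2 : ∀ v : g, v + v = 0)
include h2

lemma neg_eq' (v : g) : -v = v := neg_eq_of_add_eq_zero_left (h2 v)

lemma eq_of_add_zero {u v : g} (h : u + v = 0) : u = v := by
  have := congrArg (fun w => w + v) h
  simpa [add_assoc, h2 v] using this

lemma add_zero_of_eq {u v : g} (h : u = v) : u + v = 0 := h ▸ h2 v

lemma cancel_pair (u v : g) : u + v + v = u := by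
  rw [add_assoc, h2, add_zero]

end C2

lemma lie_comm' {g : Type*} [LieRing g] (h2 : ∀ v : g, v + v = 0) (u v : g) :
    ⁅u, v⁆ = ⁅v, u⁆ := by
  rw [← lie_skew u v]
  exact neg_eq' h2 _

section Defs

variable {F : Type*} [Field F] [CharP F 2]
variable {g : Type*} [LieRing g] [LieAlgebra F g]

/-- the second-order cocycle candidate. -/
def Phi (μ : ℕ → g → g → g) (π : ℕ → g →ₗ[F] g) (k : ℕ) (x y : g) : g :=
  ∑ p ∈ antidiagonal k, (π p.1 (μ p.2 x y) + ⁅π p.1 x, π p.2 y⁆)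

/-- the quadratic part appearing in the σ-equation (range bound `k`, order `m`). -/
def Qf (sq : g → g) (π : ℕ → g →ₗ[F] g) (k m : ℕ) (x : g) : g :=
  (∑ i ∈ range (k + 1), if 2 * i = m then sq (π i x) else 0) +
    ∑ i ∈ range (k + 1), ∑ j ∈ range (k + 1),
      if i < j ∧ i + j = m then ⁅π i x, π j x⁆ else 0

/-- the quadratic cocycle candidate. -/
def Om (sq : g → g) (σ : ℕ → g → g) (π : ℕ → g →ₗ[F] g) (k : ℕ) (x : g) : g :=
  (∑ p ∈ antidiagonal k, π p.1 (σ p.2 x)) + Qf sq π k k x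

/-- the first-order cocycle candidate. -/
def Ph1 (Dd : ℕ → g →ₗ[F] g) (π : ℕ → g →ₗ[F] g) (k : ℕ) (x : g) : g :=
  ∑ p ∈ antidiagonal k, π p.1 (Dd p.2 x)

def Eq1 (μ : ℕ → g → g → g) (π : ℕ → g →ₗ[F] g) (k : ℕ) : Prop :=
  ∀ x y : g, ∑ p ∈ antidiagonal k, π p.1 (μ p.2 x y) =
    ∑ p ∈ antidiagonal k, ⁅π p.1 x, π p.2 y⁆

def Eq2 (sq : g → g) (σ : ℕ → g → g) (π : ℕ → g →ₗ[F] g) (k : ℕ) : Prop :=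
  ∀ x : g, ∑ p ∈ antidiagonal k, π p.1 (σ p.2 x) =
    (∑ i ∈ range (k + 1), if 2 * i = k then sq (π i x) else 0) +
      ∑ i ∈ range (k + 1), ∑ j ∈ range (k + 1),
        if i < j ∧ i + j = k then ⁅π i x, π j x⁆ else 0

def Eq3 (D : g →ₗ[F] g) (Dd : ℕ → g →ₗ[F] g) (π : ℕ → g →ₗ[F] g) (k : ℕ) : Prop :=
  ∀ x : g, ∑ p ∈ antidiagonal k, π p.1 (Dd p.2 x) = D (π k x)

lemma Eq1_congr {μ : ℕ → g → g → g} {π π' : ℕ → g →ₗ[F] g} {k : ℕ}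
    (h : ∀ i ≤ k, π i = π' i) (H : Eq1 μ π k) : Eq1 μ π' k := by
  intro x y
  have e1 : ∀ p ∈ antidiagonal k, π' p.1 (μ p.2 x y) = π p.1 (μ p.2 x y) := by
    intro p hp
    rw [Finset.HasAntidiagonal.mem_antidiagonal] at hp
    rw [h p.1 (by omega)]
  have e2 : ∀ p ∈ antidiagonal k, ⁅π' p.1 x, π' p.2 y⁆ = ⁅π p.1 x, π p.2 y⁆ := by
    intro p hp
    rw [Finset.HasAntidiagonal.mem_antidiagonal] at hp
    rw [h p.1 (by omega), h p.2 (by omega)]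
  rw [Finset.sum_congr rfl e1, Finset.sum_congr rfl e2]
  exact H x y

lemma Eq2_congr {sq : g → g} {σ : ℕ → g → g} {π π' : ℕ → g →ₗ[F] g} {k : ℕ}
    (h : ∀ i ≤ k, π i = π' i) (H : Eq2 sq σ π k) : Eq2 sq σ π' k := by
  intro x
  have e1 : ∀ p ∈ antidiagonal k, π' p.1 (σ p.2 x) = π p.1 (σ p.2 x) := by
    intro p hp
    rw [Finset.HasAntidiagonal.mem_antidiagonal] at hp
    rw [h p.1 (by omega)]
  have e2 : ∀ i ∈ range (k + 1), (if 2 * i = k then sq (π' i x) else 0)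
      = (if 2 * i = k then sq (π i x) else 0) := by
    intro i hi
    rw [Finset.mem_range] at hi
    rw [h i (by omega)]
  have e3 : ∀ i ∈ range (k + 1), (∑ j ∈ range (k + 1),
        if i < j ∧ i + j = k then ⁅π' i x, π' j x⁆ else 0)
      = ∑ j ∈ range (k + 1), if i < j ∧ i + j = k then ⁅π i x, π j x⁆ else 0 := by
    intro i hi
    rw [Finset.mem_range] at hi
    refine Finset.sum_congr rfl fun j hj => ?_
    rw [Finset.mem_range] at hj
    rw [h i (by omega), h j (by omega)]
  rw [Finset.sum_congr rfl e1, Finset.sum_congr rfl e2, Finset.sum_congr rfl e3]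
  exact H x

lemma Eq3_congr {D : g →ₗ[F] g} {Dd : ℕ → g →ₗ[F] g} {π π' : ℕ → g →ₗ[F] g} {k : ℕ}
    (h : ∀ i ≤ k, π i = π' i) (H : Eq3 D Dd π k) : Eq3 D Dd π' k := by
  intro x
  have e1 : ∀ p ∈ antidiagonal k, π' p.1 (Dd p.2 x) = π p.1 (Dd p.2 x) := by
    intro p hp
    rw [Finset.HasAntidiagonal.mem_antidiagonal] at hp
    rw [h p.1 (by omega)]
  rw [Finset.sum_congr rfl e1, ← h k le_rfl]
  exact H x

end Defs


section Derived

variable {F : Type*} [Field F] [CharP F 2]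
variable {g : Type*} [LieRing g] [LieAlgebra F g]
variable {μ : ℕ → g → g → g}

lemma mu_zero_l (hμl : ∀ (i : ℕ) (a : F) (x x' y : g),
    μ i (a • x + x') y = a • μ i x y + μ i x' y) (i : ℕ) (y : g) : μ i 0 y = 0 := by
  have h := hμl i (1 : F) 0 0 y
  simp only [one_smul, add_zero] at h
  exact left_eq_add.mp h

lemma mu_add_l (hμl : ∀ (i : ℕ) (a : F) (x x' y : g),
    μ i (a • x + x') y = a • μ i x y + μ i x' y) (i : ℕ) (x x' y : g) :
    μ i (x + x') y = μ i x y + μ i x' y := by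
  have h := hμl i (1 : F) x x' y
  simpa using h

lemma mu_smul_l (hμl : ∀ (i : ℕ) (a : F) (x x' y : g),
    μ i (a • x + x') y = a • μ i x y + μ i x' y) (i : ℕ) (a : F) (x y : g) :
    μ i (a • x) y = a • μ i x y := by
  have h := hμl i a x 0 y
  simpa [mu_zero_l hμl] using h

lemma mu_zero_r (hμr : ∀ (i : ℕ) (a : F) (x y y' : g),
    μ i x (a • y + y') = a • μ i x y + μ i x y') (i : ℕ) (x : g) : μ i x 0 = 0 := by
  have h := hμr i (1 : F) x 0 0
  simp only [one_smul, add_zero] at h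
  exact left_eq_add.mp h

lemma mu_add_r (hμr : ∀ (i : ℕ) (a : F) (x y y' : g),
    μ i x (a • y + y') = a • μ i x y + μ i x y') (i : ℕ) (x y y' : g) :
    μ i x (y + y') = μ i x y + μ i x y' := by
  have h := hμr i (1 : F) x y y'
  simpa using h

lemma mu_smul_r (hμr : ∀ (i : ℕ) (a : F) (x y y' : g),
    μ i x (a • y + y') = a • μ i x y + μ i x y') (i : ℕ) (a : F) (x y : g) :
    μ i x (a • y) = a • μ i x y := by
  have h := hμr i a x y 0
  simpa [mu_zero_r hμr] using h

lemma mu_comm (h2 : ∀ v : g, v + v = 0)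
    (hμl : ∀ (i : ℕ) (a : F) (x x' y : g), μ i (a • x + x') y = a • μ i x y + μ i x' y)
    (hμr : ∀ (i : ℕ) (a : F) (x y y' : g), μ i x (a • y + y') = a • μ i x y + μ i x y')
    (hμalt : ∀ (i : ℕ) (x : g), μ i x x = 0) (i : ℕ) (x y : g) :
    μ i x y = μ i y x := by
  apply eq_of_add_zero h2
  have h := hμalt i (x + y)
  rw [mu_add_l hμl, mu_add_r hμr, mu_add_r hμr, hμalt i x, hμalt i y,
    zero_add, add_zero] at h
  exact h

end Derived

section Pad

variable {M : Type*} [AddCommMonoid M]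

lemma pad_diag {m k : ℕ} (h : m ≤ k) (f : ℕ → M) :
    (∑ i ∈ range (m + 1), if 2 * i = m then f i else 0) =
      ∑ i ∈ range (k + 1), if 2 * i = m then f i else 0 := by
  apply Finset.sum_subset
  · intro i hi
    rw [Finset.mem_range] at hi ⊢
    omega
  · intro i _ hni
    rw [Finset.mem_range] at hni
    exact if_neg (by omega)

lemma pad_tri {m k : ℕ} (h : m ≤ k) (f : ℕ → ℕ → M) :
    (∑ i ∈ range (m + 1), ∑ j ∈ range (m + 1),
        if i < j ∧ i + j = m then f i j else 0) =
      ∑ i ∈ range (k + 1), ∑ j ∈ range (k + 1),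
        if i < j ∧ i + j = m then f i j else 0 := by
  have inner : ∀ i, (∑ j ∈ range (m + 1), if i < j ∧ i + j = m then f i j else 0) =
      ∑ j ∈ range (k + 1), if i < j ∧ i + j = m then f i j else 0 := by
    intro i
    apply Finset.sum_subset
    · intro j hj
      rw [Finset.mem_range] at hj ⊢
      omega
    · intro j _ hnj
      rw [Finset.mem_range] at hnj
      exact if_neg (by omega)
  rw [Finset.sum_congr rfl fun i _ => inner i]
  apply Finset.sum_subset
  · intro i hi
    rw [Finset.mem_range] at hi ⊢
    omega
  · intro i _ hni
    rw [Finset.mem_range] at hni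
    apply Finset.sum_eq_zero
    intro j _
    exact if_neg (by omega)

end Pad

section Uniform

variable {F : Type*} [Field F] [CharP F 2]
variable {g : Type*} [LieRing g] [LieAlgebra F g]
variable {sq : g → g} {D : g →ₗ[F] g}
variable {μ : ℕ → g → g → g} {σ : ℕ → g → g} {Dd : ℕ → g →ₗ[F] g}
variable {π : ℕ → g →ₗ[F] g} {k : ℕ}

lemma UL (h2 : ∀ v : g, v + v = 0) (IH1 : ∀ m < k, Eq1 μ π m)
    {m : ℕ} (hm : m ≤ k) (u v : g) :
    ∑ p ∈ antidiagonal m, π p.1 (μ p.2 u v) =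
      (if m = k then Phi μ π k u v else 0) +
        ∑ p ∈ antidiagonal m, ⁅π p.1 u, π p.2 v⁆ := by
  rcases eq_or_lt_of_le hm with rfl | hlt
  · rw [if_pos rfl, Phi, Finset.sum_add_distrib]
    exact (cancel_pair h2 _ _).symm
  · rw [if_neg (by omega), zero_add]
    exact IH1 m hlt u v

lemma US (h2 : ∀ v : g, v + v = 0) (hπk : π k = 0) (IH2 : ∀ m < k, Eq2 sq σ π m)
    {m : ℕ} (hm : m ≤ k) (u : g) :
    ∑ p ∈ antidiagonal m, π p.1 (σ p.2 u) =
      (if m = k then Om sq σ π k u else 0) + Qf sq π k m u := by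
  rcases eq_or_lt_of_le hm with rfl | hlt
  · rw [if_pos rfl, Om]
    exact (cancel_pair h2 _ _).symm
  · rw [if_neg (by omega), zero_add, Qf, ← pad_diag (by omega : m ≤ k),
      ← pad_tri (by omega : m ≤ k)]
    exact IH2 m hlt u

lemma UD (hπk : π k = 0) (IH3 : ∀ m < k, Eq3 D Dd π m)
    {m : ℕ} (hm : m ≤ k) (u : g) :
    ∑ p ∈ antidiagonal m, π p.1 (Dd p.2 u) =
      (if m = k then Ph1 Dd π k u else 0) + D (π m u) := by
  rcases eq_or_lt_of_le hm with rfl | hlt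
  · rw [if_pos rfl, hπk, Ph1]
    simp
  · rw [if_neg (by omega), zero_add]
    exact IH3 m hlt u

lemma Qf_lie (h2 : ∀ v : g, v + v = 0)
    (hsq_ad : ∀ x y : g, ⁅sq x, y⁆ = ⁅x, ⁅x, y⁆⁆)
    {m : ℕ} (hm : m ≤ k) (x u : g) :
    ⁅Qf sq π k m x, u⁆ = ∑ p ∈ antidiagonal m, ⁅π p.1 x, ⁅π p.2 x, u⁆⁆ := by
  have hsub : ∀ a b : g, a - b = a + b := by
    intro a b; rw [sub_eq_add_neg, neg_eq' h2]
  rw [prod_split k m hm (fun i j => ⁅π i x, ⁅π j x, u⁆⁆), Qf, add_lie,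
    sum_lie', sum_lie']
  congr 1
  · refine Finset.sum_congr rfl fun i _ => ?_
    split
    · rw [hsq_ad]
    · rw [zero_lie]
  · refine Finset.sum_congr rfl fun i _ => ?_
    rw [sum_lie']
    refine Finset.sum_congr rfl fun j _ => ?_
    split
    · rw [lie_lie, hsub]
    · rw [zero_lie]

lemma Qf_D (h2 : ∀ v : g, v + v = 0)
    (hD_br : ∀ x y : g, D ⁅x, y⁆ = ⁅D x, y⁆ + ⁅x, D y⁆)
    (hD_sq : ∀ x : g, D (sq x) = ⁅x, D x⁆)
    {m : ℕ} (hm : m ≤ k) (x : g) :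
    D (Qf sq π k m x) = ∑ p ∈ antidiagonal m, ⁅π p.1 x, D (π p.2 x)⁆ := by
  rw [prod_split k m hm (fun i j => ⁅π i x, D (π j x)⁆), Qf, map_add,
    map_sum, map_sum]
  congr 1
  · refine Finset.sum_congr rfl fun i _ => ?_
    rw [apply_ite D, map_zero, hD_sq]
  · refine Finset.sum_congr rfl fun i _ => ?_
    rw [map_sum]
    refine Finset.sum_congr rfl fun j _ => ?_
    rw [apply_ite D, map_zero]
    split
    · rw [hD_br, lie_comm' h2 (D (π i x)) (π j x)]
      rw [add_comm]
    · rfl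

lemma Qf_add (h2 : ∀ v : g, v + v = 0)
    (hsq_add : ∀ x y : g, sq (x + y) = sq x + sq y + ⁅x, y⁆)
    {m : ℕ} (hm : m ≤ k) (x y : g) :
    Qf sq π k m (x + y) = Qf sq π k m x + Qf sq π k m y +
      ∑ p ∈ antidiagonal m, ⁅π p.1 x, π p.2 y⁆ := by
  rw [prod_split k m hm (fun i j => ⁅π i x, π j y⁆)]
  simp only [Qf, map_add]
  have hd : ∀ i : ℕ, (if 2 * i = m then sq (π i x + π i y) else 0) =
      (if 2 * i = m then sq (π i x) else 0) + ((if 2 * i = m then sq (π i y) else 0) +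
        (if 2 * i = m then ⁅π i x, π i y⁆ else 0)) := by
    intro i
    split
    · rw [hsq_add]; abel
    · simp
  have ht : ∀ i j : ℕ, (if i < j ∧ i + j = m then ⁅π i x + π i y, π j x + π j y⁆ else 0) =
      (if i < j ∧ i + j = m then ⁅π i x, π j x⁆ else 0) +
      ((if i < j ∧ i + j = m then ⁅π i y, π j y⁆ else 0) +
       (if i < j ∧ i + j = m then (⁅π i x, π j y⁆ + ⁅π j x, π i y⁆) else 0)) := by
    intro i j
    split
    · rw [add_lie, lie_add, lie_add, lie_comm' h2 (π i y) (π j x)]; abel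
    · simp
  simp_rw [hd, ht, Finset.sum_add_distrib]
  abel

lemma Qf_smul (hsq_smul : ∀ (a : F) (x : g), sq (a • x) = a ^ 2 • sq x)
    {m : ℕ} (a : F) (x : g) :
    Qf sq π k m (a • x) = a ^ 2 • Qf sq π k m x := by
  simp only [Qf, map_smul, smul_add, Finset.smul_sum]
  congr 1
  · refine Finset.sum_congr rfl fun i _ => ?_
    split
    · rw [hsq_smul]
    · rw [smul_zero]
  · refine Finset.sum_congr rfl fun i _ => ?_
    refine Finset.sum_congr rfl fun j _ => ?_
    split
    · rw [smul_lie, lie_smul, smul_smul, ← pow_two]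
    · rw [smul_zero]

end Uniform

section Cocycles

variable {F : Type*} [Field F] [CharP F 2]
variable {g : Type*} [LieRing g] [LieAlgebra F g]
variable {sq : g → g} {D : g →ₗ[F] g}
variable {μ : ℕ → g → g → g} {σ : ℕ → g → g} {Dd : ℕ → g →ₗ[F] g}
variable {π : ℕ → g →ₗ[F] g} {k : ℕ}

lemma Phi_funl (hμl : ∀ (i : ℕ) (a : F) (x x' y : g),
      μ i (a • x + x') y = a • μ i x y + μ i x' y)
    (a : F) (x x' y : g) :
    Phi μ π k (a • x + x') y = a • Phi μ π k x y + Phi μ π k x' y := by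
  simp only [Phi, Finset.smul_sum, ← Finset.sum_add_distrib]
  refine Finset.sum_congr rfl fun p _ => ?_
  rw [hμl, map_add, map_smul, map_add, map_smul, add_lie, smul_lie]
  simp only [smul_add]
  abel

lemma Phi_funr (hμr : ∀ (i : ℕ) (a : F) (x y y' : g),
      μ i x (a • y + y') = a • μ i x y + μ i x y')
    (a : F) (x y y' : g) :
    Phi μ π k x (a • y + y') = a • Phi μ π k x y + Phi μ π k x y' := by
  simp only [Phi, Finset.smul_sum, ← Finset.sum_add_distrib]
  refine Finset.sum_congr rfl fun p _ => ?_
  rw [hμr, map_add, map_smul, map_add, map_smul, lie_add, lie_smul]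
  simp only [smul_add]
  abel

lemma Phi_xx (h2 : ∀ v : g, v + v = 0)
    (hμalt : ∀ (i : ℕ) (x : g), μ i x x = 0) (x : g) :
    Phi μ π k x x = 0 := by
  rw [Phi]
  simp only [hμalt, map_zero, zero_add]
  rw [prod_split k k le_rfl (fun i j => ⁅π i x, π j x⁆)]
  have e1 : (∑ i ∈ range (k + 1), if 2 * i = k then ⁅π i x, π i x⁆ else 0) = 0 := by
    apply Finset.sum_eq_zero
    intro i _
    split <;> simp
  have e2 : (∑ i ∈ range (k + 1), ∑ j ∈ range (k + 1),
      if i < j ∧ i + j = k then (⁅π i x, π j x⁆ + ⁅π j x, π i x⁆) else 0) = 0 := by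
    apply Finset.sum_eq_zero
    intro i _
    apply Finset.sum_eq_zero
    intro j _
    split
    · rw [lie_comm' h2 (π j x) (π i x), h2]
    · rfl
  rw [e1, e2, add_zero]

lemma Phi_addl (hμl : ∀ (i : ℕ) (a : F) (x x' y : g),
      μ i (a • x + x') y = a • μ i x y + μ i x' y)
    (x x' y : g) : Phi μ π k (x + x') y = Phi μ π k x y + Phi μ π k x' y := by
  have h := Phi_funl (π := π) (k := k) hμl 1 x x' y
  simpa using h

lemma Phi_addr (hμr : ∀ (i : ℕ) (a : F) (x y y' : g),
      μ i x (a • y + y') = a • μ i x y + μ i x y')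
    (x y y' : g) : Phi μ π k x (y + y') = Phi μ π k x y + Phi μ π k x y' := by
  have h := Phi_funr (π := π) (k := k) hμr 1 x y y'
  simpa using h

lemma Phi_symm (h2 : ∀ v : g, v + v = 0)
    (hμl : ∀ (i : ℕ) (a : F) (x x' y : g), μ i (a • x + x') y = a • μ i x y + μ i x' y)
    (hμr : ∀ (i : ℕ) (a : F) (x y y' : g), μ i x (a • y + y') = a • μ i x y + μ i x y')
    (hμalt : ∀ (i : ℕ) (x : g), μ i x x = 0) (x y : g) :
    Phi μ π k x y = Phi μ π k y x := by
  apply eq_of_add_zero h2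
  have h := Phi_xx (π := π) (k := k) h2 hμalt (x + y)
  rw [Phi_addl hμl, Phi_addr hμr, Phi_addr hμr, Phi_xx h2 hμalt x,
    Phi_xx h2 hμalt y, zero_add, add_zero] at h
  exact h

/-- the main regrouping step for the Jacobi-type cocycle identity. -/
lemma key1 (h2 : ∀ v : g, v + v = 0)
    (hμl : ∀ (i : ℕ) (a : F) (x x' y : g), μ i (a • x + x') y = a • μ i x y + μ i x' y)
    (hμr : ∀ (i : ℕ) (a : F) (x y y' : g), μ i x (a • y + y') = a • μ i x y + μ i x y')
    (hμalt : ∀ (i : ℕ) (x : g), μ i x x = 0)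
    (hμ0 : ∀ x y : g, μ 0 x y = ⁅x, y⁆)
    (hπ0 : π 0 = LinearMap.id)
    (IH1 : ∀ m < k, Eq1 μ π m) (u v w : g) :
    (∑ p ∈ antidiagonal k, ∑ q ∈ antidiagonal p.2, π p.1 (μ q.1 u (μ q.2 v w)))
      = Phi μ π k ⁅v, w⁆ u + ⁅u, Phi μ π k v w⁆ +
        ∑ p ∈ antidiagonal k, ∑ q ∈ antidiagonal p.2, ⁅π p.1 u, ⁅π q.1 v, π q.2 w⁆⁆ := by
  rw [tri_cycle k (fun i a b => π i (μ a u (μ b v w)))]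
  have e1 : ∀ p ∈ antidiagonal k,
      (∑ q ∈ antidiagonal p.2, π q.1 (μ q.2 u (μ p.1 v w)))
      = (if p.2 = k then Phi μ π k u (μ p.1 v w) else 0) +
          ∑ q ∈ antidiagonal p.2, ⁅π q.1 u, π q.2 (μ p.1 v w)⁆ := by
    intro p hp
    rw [Finset.HasAntidiagonal.mem_antidiagonal] at hp
    exact UL h2 IH1 (by omega) u (μ p.1 v w)
  rw [Finset.sum_congr rfl e1, Finset.sum_add_distrib,
    sum_ad_ite_right k (fun p => Phi μ π k u (μ p.1 v w))]
  rw [tri_cycle' k (fun a i b => ⁅π i u, π b (μ a v w)⁆)]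
  have e2 : ∀ p ∈ antidiagonal k,
      (∑ q ∈ antidiagonal p.2, ⁅π p.1 u, π q.1 (μ q.2 v w)⁆)
      = (if p.2 = k then ⁅π p.1 u, Phi μ π k v w⁆ else 0) +
          ∑ q ∈ antidiagonal p.2, ⁅π p.1 u, ⁅π q.1 v, π q.2 w⁆⁆ := by
    intro p hp
    rw [Finset.HasAntidiagonal.mem_antidiagonal] at hp
    rw [← lie_sum', UL h2 IH1 (by omega : p.2 ≤ k) v w, lie_add, lie_sum']
    congr 1
    split <;> simp
  rw [Finset.sum_congr rfl e2, Finset.sum_add_distrib,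
    sum_ad_ite_right k (fun p => ⁅π p.1 u, Phi μ π k v w⁆), hπ0]
  rw [hμ0, Phi_symm h2 hμl hμr hμalt u ⁅v, w⁆]
  simp only [LinearMap.id_coe, id_eq]
  abel

lemma cocycle1 (h2 : ∀ v : g, v + v = 0)
    (hμl : ∀ (i : ℕ) (a : F) (x x' y : g), μ i (a • x + x') y = a • μ i x y + μ i x' y)
    (hμr : ∀ (i : ℕ) (a : F) (x y y' : g), μ i x (a • y + y') = a • μ i x y + μ i x y')
    (hμalt : ∀ (i : ℕ) (x : g), μ i x x = 0)
    (hμ0 : ∀ x y : g, μ 0 x y = ⁅x, y⁆)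
    (hJ : ∀ (m : ℕ) (x y z : g),
      ∑ p ∈ antidiagonal m,
        (μ p.1 x (μ p.2 y z) + μ p.1 y (μ p.2 z x) + μ p.1 z (μ p.2 x y)) = 0)
    (hπ0 : π 0 = LinearMap.id)
    (IH1 : ∀ m < k, Eq1 μ π m) (x y z : g) :
    ⁅x, Phi μ π k y z⁆ + Phi μ π k ⁅y, z⁆ x + ⁅y, Phi μ π k z x⁆ +
      Phi μ π k ⁅z, x⁆ y + ⁅z, Phi μ π k x y⁆ + Phi μ π k ⁅x, y⁆ z = 0 := by
  have hzero :
      (∑ p ∈ antidiagonal k, ∑ q ∈ antidiagonal p.2, π p.1 (μ q.1 x (μ q.2 y z))) +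
      (∑ p ∈ antidiagonal k, ∑ q ∈ antidiagonal p.2, π p.1 (μ q.1 y (μ q.2 z x))) +
      (∑ p ∈ antidiagonal k, ∑ q ∈ antidiagonal p.2, π p.1 (μ q.1 z (μ q.2 x y))) = 0 := by
    rw [← Finset.sum_add_distrib, ← Finset.sum_add_distrib]
    apply Finset.sum_eq_zero
    intro p _
    rw [← Finset.sum_add_distrib, ← Finset.sum_add_distrib]
    have : (∑ q ∈ antidiagonal p.2,
        (π p.1 (μ q.1 x (μ q.2 y z)) + π p.1 (μ q.1 y (μ q.2 z x)) +
          π p.1 (μ q.1 z (μ q.2 x y))))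
        = π p.1 (∑ q ∈ antidiagonal p.2,
            (μ q.1 x (μ q.2 y z) + μ q.1 y (μ q.2 z x) + μ q.1 z (μ q.2 x y))) := by
      rw [map_sum]
      refine Finset.sum_congr rfl fun q _ => ?_
      rw [map_add, map_add]
    rw [this, hJ p.2 x y z, map_zero]
  -- Jacobi for the pure bracket triple sums
  have hB :
      (∑ p ∈ antidiagonal k, ∑ q ∈ antidiagonal p.2, ⁅π p.1 x, ⁅π q.1 y, π q.2 z⁆⁆) +
      (∑ p ∈ antidiagonal k, ∑ q ∈ antidiagonal p.2, ⁅π p.1 y, ⁅π q.1 z, π q.2 x⁆⁆) +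
      (∑ p ∈ antidiagonal k, ∑ q ∈ antidiagonal p.2, ⁅π p.1 z, ⁅π q.1 x, π q.2 y⁆⁆) = 0 := by
    rw [tri_cycle k (fun i j a => ⁅π i y, ⁅π j z, π a x⁆⁆),
      tri_cycle' k (fun i j a => ⁅π i z, ⁅π j x, π a y⁆⁆)]
    rw [← Finset.sum_add_distrib, ← Finset.sum_add_distrib]
    apply Finset.sum_eq_zero
    intro p _
    rw [← Finset.sum_add_distrib, ← Finset.sum_add_distrib]
    apply Finset.sum_eq_zero
    intro q _
    exact lie_jacobi (π p.1 x) (π q.1 y) (π q.2 z)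
  have e : (∑ p ∈ antidiagonal k, ∑ q ∈ antidiagonal p.2, π p.1 (μ q.1 x (μ q.2 y z))) +
      (∑ p ∈ antidiagonal k, ∑ q ∈ antidiagonal p.2, π p.1 (μ q.1 y (μ q.2 z x))) +
      (∑ p ∈ antidiagonal k, ∑ q ∈ antidiagonal p.2, π p.1 (μ q.1 z (μ q.2 x y)))
      = (⁅x, Phi μ π k y z⁆ + Phi μ π k ⁅y, z⁆ x + ⁅y, Phi μ π k z x⁆ +
          Phi μ π k ⁅z, x⁆ y + ⁅z, Phi μ π k x y⁆ + Phi μ π k ⁅x, y⁆ z) +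
        ((∑ p ∈ antidiagonal k, ∑ q ∈ antidiagonal p.2, ⁅π p.1 x, ⁅π q.1 y, π q.2 z⁆⁆) +
         (∑ p ∈ antidiagonal k, ∑ q ∈ antidiagonal p.2, ⁅π p.1 y, ⁅π q.1 z, π q.2 x⁆⁆) +
         (∑ p ∈ antidiagonal k, ∑ q ∈ antidiagonal p.2, ⁅π p.1 z, ⁅π q.1 x, π q.2 y⁆⁆)) := by
    rw [key1 h2 hμl hμr hμalt hμ0 hπ0 IH1 x y z,
      key1 h2 hμl hμr hμalt hμ0 hπ0 IH1 y z x,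
      key1 h2 hμl hμr hμalt hμ0 hπ0 IH1 z x y]
    abel
  rw [e] at hzero
  rw [hB, add_zero] at hzero
  exact hzero

end Cocycles

section Cocycle2

variable {F : Type*} [Field F] [CharP F 2]
variable {g : Type*} [LieRing g] [LieAlgebra F g]
variable {sq : g → g} {D : g →ₗ[F] g}
variable {μ : ℕ → g → g → g} {σ : ℕ → g → g} {Dd : ℕ → g →ₗ[F] g}
variable {π : ℕ → g →ₗ[F] g} {k : ℕ}

lemma key2A (h2 : ∀ v : g, v + v = 0)
    (hsq_ad : ∀ x y : g, ⁅sq x, y⁆ = ⁅x, ⁅x, y⁆⁆)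
    (hσ0 : ∀ x : g, σ 0 x = sq x)
    (hπ0 : π 0 = LinearMap.id) (hπk : π k = 0)
    (IH1 : ∀ m < k, Eq1 μ π m) (IH2 : ∀ m < k, Eq2 sq σ π m) (x y : g) :
    (∑ p ∈ antidiagonal k, ∑ q ∈ antidiagonal p.2, π p.1 (μ q.1 (σ q.2 x) y))
      = Phi μ π k (sq x) y + ⁅y, Om sq σ π k x⁆ +
        ∑ p ∈ antidiagonal k, ∑ q ∈ antidiagonal p.2, ⁅π p.1 x, ⁅π q.1 x, π q.2 y⁆⁆ := by
  rw [tri_cycle k (fun i a b => π i (μ a (σ b x) y))]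
  have e1 : ∀ p ∈ antidiagonal k,
      (∑ q ∈ antidiagonal p.2, π q.1 (μ q.2 (σ p.1 x) y))
      = (if p.2 = k then Phi μ π k (σ p.1 x) y else 0) +
          ∑ q ∈ antidiagonal p.2, ⁅π q.1 (σ p.1 x), π q.2 y⁆ := by
    intro p hp
    rw [Finset.HasAntidiagonal.mem_antidiagonal] at hp
    exact UL h2 IH1 (by omega) (σ p.1 x) y
  rw [Finset.sum_congr rfl e1, Finset.sum_add_distrib,
    sum_ad_ite_right k (fun p => Phi μ π k (σ p.1 x) y), hσ0]
  rw [tri_swap12 k (fun i a b => ⁅π a (σ i x), π b y⁆)]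
  rw [tri_cycle k (fun i a b => ⁅π i (σ a x), π b y⁆)]
  have e2 : ∀ p ∈ antidiagonal k,
      (∑ q ∈ antidiagonal p.2, ⁅π q.1 (σ q.2 x), π p.1 y⁆)
      = (if p.2 = k then ⁅Om sq σ π k x, π p.1 y⁆ else 0) +
          ∑ q ∈ antidiagonal p.2, ⁅π q.1 x, ⁅π q.2 x, π p.1 y⁆⁆ := by
    intro p hp
    rw [Finset.HasAntidiagonal.mem_antidiagonal] at hp
    rw [← sum_lie', US h2 hπk IH2 (by omega : p.2 ≤ k) x, add_lie,
      Qf_lie h2 hsq_ad (by omega : p.2 ≤ k) x (π p.1 y)]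
    congr 1
    split <;> simp
  rw [Finset.sum_congr rfl e2, Finset.sum_add_distrib,
    sum_ad_ite_right k (fun p => ⁅Om sq σ π k x, π p.1 y⁆), hπ0]
  rw [tri_cycle' k (fun a i b => ⁅π i x, ⁅π b x, π a y⁆⁆)]
  simp only [LinearMap.id_coe, id_eq]
  rw [lie_comm' h2 (Om sq σ π k x) y]
  abel

lemma cocycle2 (h2 : ∀ v : g, v + v = 0)
    (hsq_ad : ∀ x y : g, ⁅sq x, y⁆ = ⁅x, ⁅x, y⁆⁆)
    (hμl : ∀ (i : ℕ) (a : F) (x x' y : g), μ i (a • x + x') y = a • μ i x y + μ i x' y)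
    (hμr : ∀ (i : ℕ) (a : F) (x y y' : g), μ i x (a • y + y') = a • μ i x y + μ i x y')
    (hμalt : ∀ (i : ℕ) (x : g), μ i x x = 0)
    (hμ0 : ∀ x y : g, μ 0 x y = ⁅x, y⁆)
    (hσ0 : ∀ x : g, σ 0 x = sq x)
    (hR : ∀ (m : ℕ) (x y : g),
      ∑ p ∈ antidiagonal m, (μ p.1 (σ p.2 x) y + μ p.1 x (μ p.2 x y)) = 0)
    (hπ0 : π 0 = LinearMap.id) (hπk : π k = 0)
    (IH1 : ∀ m < k, Eq1 μ π m) (IH2 : ∀ m < k, Eq2 sq σ π m) (x y : g) :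
    ⁅x, Phi μ π k x y⁆ + Phi μ π k (sq x) y + Phi μ π k ⁅x, y⁆ x +
      ⁅y, Om sq σ π k x⁆ = 0 := by
  have hzero :
      (∑ p ∈ antidiagonal k, ∑ q ∈ antidiagonal p.2, π p.1 (μ q.1 (σ q.2 x) y)) +
      (∑ p ∈ antidiagonal k, ∑ q ∈ antidiagonal p.2, π p.1 (μ q.1 x (μ q.2 x y))) = 0 := by
    rw [← Finset.sum_add_distrib]
    apply Finset.sum_eq_zero
    intro p _
    rw [← Finset.sum_add_distrib]
    have : (∑ q ∈ antidiagonal p.2,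
        (π p.1 (μ q.1 (σ q.2 x) y) + π p.1 (μ q.1 x (μ q.2 x y))))
        = π p.1 (∑ q ∈ antidiagonal p.2, (μ q.1 (σ q.2 x) y + μ q.1 x (μ q.2 x y))) := by
      rw [map_sum]
      exact Finset.sum_congr rfl fun q _ => (map_add _ _ _).symm
    rw [this, hR p.2 x y, map_zero]
  have e : (∑ p ∈ antidiagonal k, ∑ q ∈ antidiagonal p.2, π p.1 (μ q.1 (σ q.2 x) y)) +
      (∑ p ∈ antidiagonal k, ∑ q ∈ antidiagonal p.2, π p.1 (μ q.1 x (μ q.2 x y)))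
      = (⁅x, Phi μ π k x y⁆ + Phi μ π k (sq x) y + Phi μ π k ⁅x, y⁆ x +
          ⁅y, Om sq σ π k x⁆) +
        ((∑ p ∈ antidiagonal k, ∑ q ∈ antidiagonal p.2, ⁅π p.1 x, ⁅π q.1 x, π q.2 y⁆⁆) +
         (∑ p ∈ antidiagonal k, ∑ q ∈ antidiagonal p.2, ⁅π p.1 x, ⁅π q.1 x, π q.2 y⁆⁆)) := by
    rw [key2A h2 hsq_ad hσ0 hπ0 hπk IH1 IH2 x y,
      key1 h2 hμl hμr hμalt hμ0 hπ0 IH1 x x y]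
    abel
  rw [e, h2, add_zero] at hzero
  exact hzero

end Cocycle2

lemma sum_ad_swap {M : Type*} [AddCommMonoid M] (k : ℕ) (f : ℕ → ℕ → M) :
    (∑ p ∈ Finset.HasAntidiagonal.antidiagonal k, f p.1 p.2) = ∑ p ∈ Finset.HasAntidiagonal.antidiagonal k, f p.2 p.1 := by
  rw [← Finset.Nat.sum_antidiagonal_swap (f := fun q => f q.1 q.2)]
  rfl

section Cocycle34

variable {F : Type*} [Field F] [CharP F 2]
variable {g : Type*} [LieRing g] [LieAlgebra F g]
variable {sq : g → g} {D : g →ₗ[F] g}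
variable {μ : ℕ → g → g → g} {σ : ℕ → g → g} {Dd : ℕ → g →ₗ[F] g}
variable {π : ℕ → g →ₗ[F] g} {k : ℕ}

lemma key3A (h2 : ∀ v : g, v + v = 0)
    (hμ0 : ∀ x y : g, μ 0 x y = ⁅x, y⁆)
    (hπk : π k = 0)
    (IH1 : ∀ m < k, Eq1 μ π m) (IH3 : ∀ m < k, Eq3 D Dd π m) (x y : g) :
    (∑ p ∈ antidiagonal k, ∑ q ∈ antidiagonal p.2, π p.1 (Dd q.1 (μ q.2 x y)))
      = Ph1 Dd π k ⁅x, y⁆ + D (Phi μ π k x y) +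
        ∑ p ∈ antidiagonal k, D ⁅π p.1 x, π p.2 y⁆ := by
  rw [tri_cycle k (fun i a b => π i (Dd a (μ b x y)))]
  have e1 : ∀ p ∈ antidiagonal k,
      (∑ q ∈ antidiagonal p.2, π q.1 (Dd q.2 (μ p.1 x y)))
      = (if p.2 = k then Ph1 Dd π k (μ p.1 x y) else 0) + D (π p.2 (μ p.1 x y)) := by
    intro p hp
    rw [Finset.HasAntidiagonal.mem_antidiagonal] at hp
    exact UD hπk IH3 (by omega) (μ p.1 x y)
  rw [Finset.sum_congr rfl e1, Finset.sum_add_distrib,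
    sum_ad_ite_right k (fun p => Ph1 Dd π k (μ p.1 x y)), ← map_sum,
    sum_ad_swap k (fun i a => (π a) (μ i x y)),
    UL h2 IH1 le_rfl x y, if_pos rfl, map_add, map_sum, hμ0]
  abel

lemma key3B (h2 : ∀ v : g, v + v = 0)
    (hDd0 : Dd 0 = D)
    (hπ0 : π 0 = LinearMap.id) (hπk : π k = 0)
    (IH1 : ∀ m < k, Eq1 μ π m) (IH3 : ∀ m < k, Eq3 D Dd π m) (x y : g) :
    (∑ p ∈ antidiagonal k, ∑ q ∈ antidiagonal p.2, π p.1 (μ q.2 (Dd q.1 x) y))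
      = Phi μ π k (D x) y + ⁅y, Ph1 Dd π k x⁆ +
        ∑ p ∈ antidiagonal k, ⁅D (π p.1 x), π p.2 y⁆ := by
  rw [tri_swap12 k (fun i a b => π i (μ b (Dd a x) y))]
  have e1 : ∀ p ∈ antidiagonal k,
      (∑ q ∈ antidiagonal p.2, π q.1 (μ q.2 (Dd p.1 x) y))
      = (if p.2 = k then Phi μ π k (Dd p.1 x) y else 0) +
          ∑ q ∈ antidiagonal p.2, ⁅π q.1 (Dd p.1 x), π q.2 y⁆ := by
    intro p hp
    rw [Finset.HasAntidiagonal.mem_antidiagonal] at hp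
    exact UL h2 IH1 (by omega) (Dd p.1 x) y
  rw [Finset.sum_congr rfl e1, Finset.sum_add_distrib,
    sum_ad_ite_right k (fun p => Phi μ π k (Dd p.1 x) y), hDd0]
  rw [tri_swap12 k (fun i a b => ⁅π a (Dd i x), π b y⁆)]
  rw [tri_cycle k (fun i a b => ⁅π i (Dd a x), π b y⁆)]
  have e2 : ∀ p ∈ antidiagonal k,
      (∑ q ∈ antidiagonal p.2, ⁅π q.1 (Dd q.2 x), π p.1 y⁆)
      = (if p.2 = k then ⁅Ph1 Dd π k x, π p.1 y⁆ else 0) +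
          ⁅D (π p.2 x), π p.1 y⁆ := by
    intro p hp
    rw [Finset.HasAntidiagonal.mem_antidiagonal] at hp
    rw [← sum_lie', UD hπk IH3 (by omega : p.2 ≤ k) x, add_lie]
    congr 1
    split <;> simp
  rw [Finset.sum_congr rfl e2, Finset.sum_add_distrib,
    sum_ad_ite_right k (fun p => ⁅Ph1 Dd π k x, π p.1 y⁆), hπ0,
    sum_ad_swap k (fun i a => ⁅D (π a x), π i y⁆)]
  simp only [LinearMap.id_coe, id_eq]
  rw [lie_comm' h2 (Ph1 Dd π k x) y]
  abel

lemma key3C (h2 : ∀ v : g, v + v = 0)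
    (hDd0 : Dd 0 = D)
    (hπ0 : π 0 = LinearMap.id) (hπk : π k = 0)
    (IH1 : ∀ m < k, Eq1 μ π m) (IH3 : ∀ m < k, Eq3 D Dd π m) (x y : g) :
    (∑ p ∈ antidiagonal k, ∑ q ∈ antidiagonal p.2, π p.1 (μ q.2 x (Dd q.1 y)))
      = Phi μ π k x (D y) + ⁅x, Ph1 Dd π k y⁆ +
        ∑ p ∈ antidiagonal k, ⁅π p.1 x, D (π p.2 y)⁆ := by
  rw [tri_swap12 k (fun i a b => π i (μ b x (Dd a y)))]
  have e1 : ∀ p ∈ antidiagonal k,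
      (∑ q ∈ antidiagonal p.2, π q.1 (μ q.2 x (Dd p.1 y)))
      = (if p.2 = k then Phi μ π k x (Dd p.1 y) else 0) +
          ∑ q ∈ antidiagonal p.2, ⁅π q.1 x, π q.2 (Dd p.1 y)⁆ := by
    intro p hp
    rw [Finset.HasAntidiagonal.mem_antidiagonal] at hp
    exact UL h2 IH1 (by omega) x (Dd p.1 y)
  rw [Finset.sum_congr rfl e1, Finset.sum_add_distrib,
    sum_ad_ite_right k (fun p => Phi μ π k x (Dd p.1 y)), hDd0]
  rw [tri_cycle' k (fun i a b => ⁅π a x, π b (Dd i y)⁆)]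
  have e2 : ∀ p ∈ antidiagonal k,
      (∑ q ∈ antidiagonal p.2, ⁅π p.1 x, π q.1 (Dd q.2 y)⁆)
      = (if p.2 = k then ⁅π p.1 x, Ph1 Dd π k y⁆ else 0) +
          ⁅π p.1 x, D (π p.2 y)⁆ := by
    intro p hp
    rw [Finset.HasAntidiagonal.mem_antidiagonal] at hp
    rw [← lie_sum', UD hπk IH3 (by omega : p.2 ≤ k) y, lie_add]
    congr 1
    split <;> simp
  rw [Finset.sum_congr rfl e2, Finset.sum_add_distrib,
    sum_ad_ite_right k (fun p => ⁅π p.1 x, Ph1 Dd π k y⁆), hπ0]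
  simp only [LinearMap.id_coe, id_eq]
  abel

lemma cocycle3 (h2 : ∀ v : g, v + v = 0)
    (hD_br : ∀ x y : g, D ⁅x, y⁆ = ⁅D x, y⁆ + ⁅x, D y⁆)
    (hμ0 : ∀ x y : g, μ 0 x y = ⁅x, y⁆)
    (hDd0 : Dd 0 = D)
    (hDL : ∀ (m : ℕ) (x y : g),
      ∑ p ∈ antidiagonal m,
        (Dd p.1 (μ p.2 x y) + μ p.2 (Dd p.1 x) y + μ p.2 x (Dd p.1 y)) = 0)
    (hπ0 : π 0 = LinearMap.id) (hπk : π k = 0)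
    (IH1 : ∀ m < k, Eq1 μ π m) (IH3 : ∀ m < k, Eq3 D Dd π m) (x y : g) :
    Ph1 Dd π k ⁅x, y⁆ + ⁅x, Ph1 Dd π k y⁆ + ⁅y, Ph1 Dd π k x⁆ +
      Phi μ π k (D x) y + Phi μ π k x (D y) + D (Phi μ π k x y) = 0 := by
  have hzero :
      (∑ p ∈ antidiagonal k, ∑ q ∈ antidiagonal p.2, π p.1 (Dd q.1 (μ q.2 x y))) +
      (∑ p ∈ antidiagonal k, ∑ q ∈ antidiagonal p.2, π p.1 (μ q.2 (Dd q.1 x) y)) +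
      (∑ p ∈ antidiagonal k, ∑ q ∈ antidiagonal p.2, π p.1 (μ q.2 x (Dd q.1 y))) = 0 := by
    rw [← Finset.sum_add_distrib, ← Finset.sum_add_distrib]
    apply Finset.sum_eq_zero
    intro p _
    rw [← Finset.sum_add_distrib, ← Finset.sum_add_distrib]
    have : (∑ q ∈ antidiagonal p.2,
        (π p.1 (Dd q.1 (μ q.2 x y)) + π p.1 (μ q.2 (Dd q.1 x) y) +
          π p.1 (μ q.2 x (Dd q.1 y))))
        = π p.1 (∑ q ∈ antidiagonal p.2,
            (Dd q.1 (μ q.2 x y) + μ q.2 (Dd q.1 x) y + μ q.2 x (Dd q.1 y))) := by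
      rw [map_sum]
      refine Finset.sum_congr rfl fun q _ => ?_
      rw [map_add, map_add]
    rw [this, hDL p.2 x y, map_zero]
  have hE : (∑ p ∈ antidiagonal k, D ⁅π p.1 x, π p.2 y⁆) +
      ((∑ p ∈ antidiagonal k, ⁅D (π p.1 x), π p.2 y⁆) +
       (∑ p ∈ antidiagonal k, ⁅π p.1 x, D (π p.2 y)⁆)) = 0 := by
    rw [← Finset.sum_add_distrib, ← Finset.sum_add_distrib]
    apply Finset.sum_eq_zero
    intro p _
    rw [← hD_br]
    exact h2 _
  have e : (∑ p ∈ antidiagonal k, ∑ q ∈ antidiagonal p.2, π p.1 (Dd q.1 (μ q.2 x y))) +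
      (∑ p ∈ antidiagonal k, ∑ q ∈ antidiagonal p.2, π p.1 (μ q.2 (Dd q.1 x) y)) +
      (∑ p ∈ antidiagonal k, ∑ q ∈ antidiagonal p.2, π p.1 (μ q.2 x (Dd q.1 y)))
      = (Ph1 Dd π k ⁅x, y⁆ + ⁅x, Ph1 Dd π k y⁆ + ⁅y, Ph1 Dd π k x⁆ +
          Phi μ π k (D x) y + Phi μ π k x (D y) + D (Phi μ π k x y)) +
        ((∑ p ∈ antidiagonal k, D ⁅π p.1 x, π p.2 y⁆) +
         ((∑ p ∈ antidiagonal k, ⁅D (π p.1 x), π p.2 y⁆) +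
          (∑ p ∈ antidiagonal k, ⁅π p.1 x, D (π p.2 y)⁆))) := by
    rw [key3A h2 hμ0 hπk IH1 IH3 x y, key3B h2 hDd0 hπ0 hπk IH1 IH3 x y,
      key3C h2 hDd0 hπ0 hπk IH1 IH3 x y]
    abel
  rw [e, hE, add_zero] at hzero
  exact hzero

lemma key4A (h2 : ∀ v : g, v + v = 0)
    (hD_br : ∀ x y : g, D ⁅x, y⁆ = ⁅D x, y⁆ + ⁅x, D y⁆)
    (hD_sq : ∀ x : g, D (sq x) = ⁅x, D x⁆)
    (hσ0 : ∀ x : g, σ 0 x = sq x)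
    (hπk : π k = 0)
    (IH2 : ∀ m < k, Eq2 sq σ π m) (IH3 : ∀ m < k, Eq3 D Dd π m) (x : g) :
    (∑ p ∈ antidiagonal k, ∑ q ∈ antidiagonal p.2, π p.1 (Dd q.1 (σ q.2 x)))
      = Ph1 Dd π k (sq x) + D (Om sq σ π k x) +
        ∑ p ∈ antidiagonal k, ⁅π p.1 x, D (π p.2 x)⁆ := by
  rw [tri_cycle k (fun i a b => π i (Dd a (σ b x)))]
  have e1 : ∀ p ∈ antidiagonal k,
      (∑ q ∈ antidiagonal p.2, π q.1 (Dd q.2 (σ p.1 x)))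
      = (if p.2 = k then Ph1 Dd π k (σ p.1 x) else 0) + D (π p.2 (σ p.1 x)) := by
    intro p hp
    rw [Finset.HasAntidiagonal.mem_antidiagonal] at hp
    exact UD hπk IH3 (by omega) (σ p.1 x)
  rw [Finset.sum_congr rfl e1, Finset.sum_add_distrib,
    sum_ad_ite_right k (fun p => Ph1 Dd π k (σ p.1 x)), ← map_sum,
    sum_ad_swap k (fun i a => (π a) (σ i x)),
    US h2 hπk IH2 le_rfl x, if_pos rfl, map_add,
    Qf_D h2 hD_br hD_sq le_rfl x, hσ0]
  abel

lemma cocycle4 (h2 : ∀ v : g, v + v = 0)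
    (hD_br : ∀ x y : g, D ⁅x, y⁆ = ⁅D x, y⁆ + ⁅x, D y⁆)
    (hD_sq : ∀ x : g, D (sq x) = ⁅x, D x⁆)
    (hσ0 : ∀ x : g, σ 0 x = sq x)
    (hDd0 : Dd 0 = D)
    (hDS : ∀ (m : ℕ) (x : g),
      ∑ p ∈ antidiagonal m, (Dd p.1 (σ p.2 x) + μ p.2 x (Dd p.1 x)) = 0)
    (hπ0 : π 0 = LinearMap.id) (hπk : π k = 0)
    (IH1 : ∀ m < k, Eq1 μ π m) (IH2 : ∀ m < k, Eq2 sq σ π m)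
    (IH3 : ∀ m < k, Eq3 D Dd π m) (x : g) :
    Ph1 Dd π k (sq x) + ⁅x, Ph1 Dd π k x⁆ + D (Om sq σ π k x) +
      Phi μ π k x (D x) = 0 := by
  have hzero :
      (∑ p ∈ antidiagonal k, ∑ q ∈ antidiagonal p.2, π p.1 (Dd q.1 (σ q.2 x))) +
      (∑ p ∈ antidiagonal k, ∑ q ∈ antidiagonal p.2, π p.1 (μ q.2 x (Dd q.1 x))) = 0 := by
    rw [← Finset.sum_add_distrib]
    apply Finset.sum_eq_zero
    intro p _
    rw [← Finset.sum_add_distrib]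
    have : (∑ q ∈ antidiagonal p.2,
        (π p.1 (Dd q.1 (σ q.2 x)) + π p.1 (μ q.2 x (Dd q.1 x))))
        = π p.1 (∑ q ∈ antidiagonal p.2, (Dd q.1 (σ q.2 x) + μ q.2 x (Dd q.1 x))) := by
      rw [map_sum]
      exact Finset.sum_congr rfl fun q _ => (map_add _ _ _).symm
    rw [this, hDS p.2 x, map_zero]
  have e : (∑ p ∈ antidiagonal k, ∑ q ∈ antidiagonal p.2, π p.1 (Dd q.1 (σ q.2 x))) +
      (∑ p ∈ antidiagonal k, ∑ q ∈ antidiagonal p.2, π p.1 (μ q.2 x (Dd q.1 x)))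
      = (Ph1 Dd π k (sq x) + ⁅x, Ph1 Dd π k x⁆ + D (Om sq σ π k x) +
          Phi μ π k x (D x)) +
        ((∑ p ∈ antidiagonal k, ⁅π p.1 x, D (π p.2 x)⁆) +
         (∑ p ∈ antidiagonal k, ⁅π p.1 x, D (π p.2 x)⁆)) := by
    rw [key4A h2 hD_br hD_sq hσ0 hπk IH2 IH3 x,
      key3C h2 hDd0 hπ0 hπk IH1 IH3 x x]
    abel
  rw [e, h2, add_zero] at hzero
  exact hzero

end Cocycle34

section KeyLemma

variable {F : Type*} [Field F] [CharP F 2]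
variable {g : Type*} [LieRing g] [LieAlgebra F g]
variable {sq : g → g} {D : g →ₗ[F] g}
variable {μ : ℕ → g → g → g} {σ : ℕ → g → g} {Dd : ℕ → g →ₗ[F] g}
variable {π : ℕ → g →ₗ[F] g} {k : ℕ}

lemma Om_smul (hsq_smul : ∀ (a : F) (x : g), sq (a • x) = a ^ 2 • sq x)
    (hσ_smul : ∀ (i : ℕ) (a : F) (x : g), σ i (a • x) = a ^ 2 • σ i x)
    (a : F) (x : g) :
    Om sq σ π k (a • x) = a ^ 2 • Om sq σ π k x := by
  rw [Om, Om, Qf_smul hsq_smul, smul_add, Finset.smul_sum]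
  congr 1
  refine Finset.sum_congr rfl fun p _ => ?_
  rw [hσ_smul, map_smul]

lemma Om_add (h2 : ∀ v : g, v + v = 0)
    (hsq_add : ∀ x y : g, sq (x + y) = sq x + sq y + ⁅x, y⁆)
    (hσadd : ∀ (i : ℕ) (x y : g), σ i (x + y) = σ i x + σ i y + μ i x y)
    (x y : g) :
    Om sq σ π k (x + y) = Om sq σ π k x + Om sq σ π k y + Phi μ π k x y := by
  rw [Om, Om, Om, Qf_add h2 hsq_add le_rfl x y, Phi, Finset.sum_add_distrib]
  have e : (∑ p ∈ antidiagonal k, π p.1 (σ p.2 (x + y)))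
      = (∑ p ∈ antidiagonal k, π p.1 (σ p.2 x)) +
        (∑ p ∈ antidiagonal k, π p.1 (σ p.2 y)) +
        ∑ p ∈ antidiagonal k, π p.1 (μ p.2 x y) := by
    rw [← Finset.sum_add_distrib, ← Finset.sum_add_distrib]
    refine Finset.sum_congr rfl fun p _ => ?_
    rw [hσadd, map_add, map_add]
  rw [e]
  abel

/-- `Ph1` as a linear map. -/
def Ph1L (Dd : ℕ → g →ₗ[F] g) (π : ℕ → g →ₗ[F] g) (k : ℕ) : g →ₗ[F] g where
  toFun := Ph1 Dd π k
  map_add' a b := by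
    simp only [Ph1, map_add, Finset.sum_add_distrib]
  map_smul' c a := by
    simp only [Ph1, map_smul, Finset.smul_sum, RingHom.id_apply]

lemma Ph1L_apply (x : g) : Ph1L Dd π k x = Ph1 Dd π k x := rfl

lemma key (h2 : ∀ v : g, v + v = 0)
    (hsq_ad : ∀ x y : g, ⁅sq x, y⁆ = ⁅x, ⁅x, y⁆⁆)
    (hsq_smul : ∀ (a : F) (x : g), sq (a • x) = a ^ 2 • sq x)
    (hsq_add : ∀ x y : g, sq (x + y) = sq x + sq y + ⁅x, y⁆)
    (hD_br : ∀ x y : g, D ⁅x, y⁆ = ⁅D x, y⁆ + ⁅x, D y⁆)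
    (hD_sq : ∀ x : g, D (sq x) = ⁅x, D x⁆)
    (H2 : ∀ (φ₂ : g → g → g) (ω₂ : g → g) (φ₁ : g →ₗ[F] g),
      (∀ (a : F) (x x' y : g), φ₂ (a • x + x') y = a • φ₂ x y + φ₂ x' y) →
      (∀ (a : F) (x y y' : g), φ₂ x (a • y + y') = a • φ₂ x y + φ₂ x y') →
      (∀ x : g, φ₂ x x = 0) →
      (∀ (a : F) (x : g), ω₂ (a • x) = a ^ 2 • ω₂ x) →
      (∀ x y : g, ω₂ (x + y) = ω₂ x + ω₂ y + φ₂ x y) →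
      (∀ x y z : g,
        ⁅x, φ₂ y z⁆ + φ₂ ⁅y, z⁆ x + ⁅y, φ₂ z x⁆ + φ₂ ⁅z, x⁆ y +
          ⁅z, φ₂ x y⁆ + φ₂ ⁅x, y⁆ z = 0) →
      (∀ x y : g, ⁅x, φ₂ x y⁆ + φ₂ (sq x) y + φ₂ ⁅x, y⁆ x + ⁅y, ω₂ x⁆ = 0) →
      (∀ x y : g,
        φ₁ ⁅x, y⁆ + ⁅x, φ₁ y⁆ + ⁅y, φ₁ x⁆ +
          φ₂ (D x) y + φ₂ x (D y) + D (φ₂ x y) = 0) →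
      (∀ x : g, φ₁ (sq x) + ⁅x, φ₁ x⁆ + D (ω₂ x) + φ₂ x (D x) = 0) →
      ∃ π : g →ₗ[F] g,
        (∀ x y : g, φ₂ x y = π ⁅x, y⁆ + ⁅x, π y⁆ + ⁅y, π x⁆) ∧
        (∀ x : g, ω₂ x = π (sq x) + ⁅x, π x⁆) ∧
        (∀ x : g, φ₁ x = D (π x) + π (D x)))
    (hμl : ∀ (i : ℕ) (a : F) (x x' y : g), μ i (a • x + x') y = a • μ i x y + μ i x' y)
    (hμr : ∀ (i : ℕ) (a : F) (x y y' : g), μ i x (a • y + y') = a • μ i x y + μ i x y')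
    (hμalt : ∀ (i : ℕ) (x : g), μ i x x = 0)
    (hμ0 : ∀ x y : g, μ 0 x y = ⁅x, y⁆)
    (hσ0 : ∀ x : g, σ 0 x = sq x)
    (hDd0 : Dd 0 = D)
    (hσ_smul : ∀ (i : ℕ) (a : F) (x : g), σ i (a • x) = a ^ 2 • σ i x)
    (hσadd : ∀ (i : ℕ) (x y : g), σ i (x + y) = σ i x + σ i y + μ i x y)
    (hJ : ∀ (m : ℕ) (x y z : g),
      ∑ p ∈ antidiagonal m,
        (μ p.1 x (μ p.2 y z) + μ p.1 y (μ p.2 z x) + μ p.1 z (μ p.2 x y)) = 0)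
    (hR : ∀ (m : ℕ) (x y : g),
      ∑ p ∈ antidiagonal m, (μ p.1 (σ p.2 x) y + μ p.1 x (μ p.2 x y)) = 0)
    (hDL : ∀ (m : ℕ) (x y : g),
      ∑ p ∈ antidiagonal m,
        (Dd p.1 (μ p.2 x y) + μ p.2 (Dd p.1 x) y + μ p.2 x (Dd p.1 y)) = 0)
    (hDS : ∀ (m : ℕ) (x : g),
      ∑ p ∈ antidiagonal m, (Dd p.1 (σ p.2 x) + μ p.2 x (Dd p.1 x)) = 0)
    (hk : 0 < k)
    (hπ0 : π 0 = LinearMap.id) (hπk : π k = 0)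
    (IH1 : ∀ m < k, Eq1 μ π m) (IH2 : ∀ m < k, Eq2 sq σ π m)
    (IH3 : ∀ m < k, Eq3 D Dd π m) :
    ∃ q : g →ₗ[F] g, Eq1 μ (Function.update π k q) k ∧
      Eq2 sq σ (Function.update π k q) k ∧ Eq3 D Dd (Function.update π k q) k := by
  obtain ⟨Pq, hPq1, hPq2, hPq3⟩ :=
    H2 (Phi μ π k) (Om sq σ π k) (Ph1L Dd π k)
      (fun a x x' y => Phi_funl hμl a x x' y)
      (fun a x y y' => Phi_funr hμr a x y y')
      (fun x => Phi_xx h2 hμalt x)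
      (fun a x => Om_smul hsq_smul hσ_smul a x)
      (fun x y => Om_add h2 hsq_add hσadd x y)
      (fun x y z => cocycle1 h2 hμl hμr hμalt hμ0 hJ hπ0 IH1 x y z)
      (fun x y => cocycle2 h2 hsq_ad hμl hμr hμalt hμ0 hσ0 hR hπ0 hπk IH1 IH2 x y)
      (fun x y => cocycle3 h2 hD_br hμ0 hDd0 hDL hπ0 hπk IH1 IH3 x y)
      (fun x => cocycle4 h2 hD_br hD_sq hσ0 hDd0 hDS hπ0 hπk IH1 IH2 IH3 x)
  refine ⟨Pq, ?_, ?_, ?_⟩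
  · -- Eq1 at order k for the updated family
    intro x y
    have d1 : ∀ p ∈ antidiagonal k,
        (Function.update π k Pq) p.1 (μ p.2 x y)
        = π p.1 (μ p.2 x y) + (if p.1 = k then Pq ⁅x, y⁆ else 0) := by
      intro p hp
      rw [Finset.HasAntidiagonal.mem_antidiagonal] at hp
      by_cases h : p.1 = k
      · have hp2 : p.2 = 0 := by omega
        rw [if_pos h, h, hp2, Function.update_self, hπk, hμ0]
        simp
      · rw [Function.update_of_ne h, if_neg h, add_zero]
    have d2 : ∀ p ∈ antidiagonal k,
        ⁅(Function.update π k Pq) p.1 x, (Function.update π k Pq) p.2 y⁆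
        = ⁅π p.1 x, π p.2 y⁆ +
          ((if p.1 = k then ⁅Pq x, y⁆ else 0) + (if p.2 = k then ⁅x, Pq y⁆ else 0)) := by
      intro p hp
      rw [Finset.HasAntidiagonal.mem_antidiagonal] at hp
      by_cases h : p.1 = k
      · have hp2 : p.2 = 0 := by omega
        have hne : p.2 ≠ k := by omega
        rw [if_pos h, if_neg hne, h, hp2, Function.update_self,
          Function.update_of_ne (by omega : (0:ℕ) ≠ k), hπ0, hπk]
        simp
      · by_cases h' : p.2 = k
        · have hp1 : p.1 = 0 := by omega
          rw [if_neg h, if_pos h', h', hp1, Function.update_self,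
            Function.update_of_ne (by omega : (0:ℕ) ≠ k), hπ0, hπk]
          simp
        · rw [Function.update_of_ne h, Function.update_of_ne h', if_neg h, if_neg h']
          simp
    rw [Finset.sum_congr rfl d1, Finset.sum_congr rfl d2, Finset.sum_add_distrib,
      Finset.sum_add_distrib, Finset.sum_add_distrib,
      sum_ad_ite_left k (fun _ => Pq ⁅x, y⁆),
      sum_ad_ite_left k (fun _ => ⁅Pq x, y⁆),
      sum_ad_ite_right k (fun _ => ⁅x, Pq y⁆),
      UL h2 IH1 le_rfl x y, if_pos rfl, hPq1 x y,
      lie_comm' h2 y (Pq x)]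
    have goal' : ((Pq ⁅x, y⁆ + ⁅x, Pq y⁆ + ⁅Pq x, y⁆ +
        ∑ p ∈ antidiagonal k, ⁅π p.1 x, π p.2 y⁆) + Pq ⁅x, y⁆)
        = ((∑ p ∈ antidiagonal k, ⁅π p.1 x, π p.2 y⁆) + (⁅Pq x, y⁆ + ⁅x, Pq y⁆)) +
          (Pq ⁅x, y⁆ + Pq ⁅x, y⁆) := by abel
    rw [goal', h2, add_zero]
  · -- Eq2 at order k
    intro x
    have d1 : ∀ p ∈ antidiagonal k,
        (Function.update π k Pq) p.1 (σ p.2 x)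
        = π p.1 (σ p.2 x) + (if p.1 = k then Pq (sq x) else 0) := by
      intro p hp
      rw [Finset.HasAntidiagonal.mem_antidiagonal] at hp
      by_cases h : p.1 = k
      · have hp2 : p.2 = 0 := by omega
        rw [if_pos h, h, hp2, Function.update_self, hπk, hσ0]
        simp
      · rw [Function.update_of_ne h, if_neg h, add_zero]
    have d2 : ∀ i ∈ range (k + 1),
        (if 2 * i = k then sq ((Function.update π k Pq) i x) else 0)
        = if 2 * i = k then sq (π i x) else 0 := by
      intro i _
      by_cases h : 2 * i = k
      · rw [if_pos h, if_pos h, Function.update_of_ne (by omega : i ≠ k)]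
      · rw [if_neg h, if_neg h]
    have d3 : ∀ i ∈ range (k + 1), ∀ j ∈ range (k + 1),
        (if i < j ∧ i + j = k then
            ⁅(Function.update π k Pq) i x, (Function.update π k Pq) j x⁆ else 0)
        = (if i < j ∧ i + j = k then ⁅π i x, π j x⁆ else 0) +
          (if i = 0 ∧ j = k then ⁅x, Pq x⁆ else 0) := by
      intro i _ j _
      by_cases hc : i < j ∧ i + j = k
      · by_cases hj : j = k
        · have hi : i = 0 := by omega
          rw [if_pos hc, if_pos hc, if_pos ⟨hi, hj⟩, hi, hj, Function.update_self,
            Function.update_of_ne (by omega : (0:ℕ) ≠ k), hπ0, hπk]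
          simp
        · have hi : i ≠ k := by omega
          rw [if_pos hc, if_pos hc, if_neg (by omega : ¬ (i = 0 ∧ j = k)),
            Function.update_of_ne hi, Function.update_of_ne hj, add_zero]
      · have : ¬ (i = 0 ∧ j = k) := by omega
        rw [if_neg hc, if_neg hc, if_neg this, add_zero]
    have collapse : (∑ i ∈ range (k + 1), ∑ j ∈ range (k + 1),
        if i = 0 ∧ j = k then ⁅x, Pq x⁆ else 0) = ⁅x, Pq x⁆ := by
      rw [Finset.sum_eq_single_of_mem 0 (Finset.mem_range.mpr (by omega))]
      · rw [Finset.sum_eq_single_of_mem k (Finset.mem_range.mpr (by omega))]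
        · rw [if_pos ⟨rfl, rfl⟩]
        · intro j _ hj
          rw [if_neg (by omega : ¬ ((0:ℕ) = 0 ∧ j = k))]
      · intro i _ hi
        apply Finset.sum_eq_zero
        intro j _
        rw [if_neg (by omega : ¬ (i = 0 ∧ j = k))]
    have d3' : (∑ i ∈ range (k + 1), ∑ j ∈ range (k + 1),
        if i < j ∧ i + j = k then
          ⁅(Function.update π k Pq) i x, (Function.update π k Pq) j x⁆ else 0)
        = (∑ i ∈ range (k + 1), ∑ j ∈ range (k + 1),
            if i < j ∧ i + j = k then ⁅π i x, π j x⁆ else 0) + ⁅x, Pq x⁆ := by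
      rw [← collapse, ← Finset.sum_add_distrib]
      refine Finset.sum_congr rfl fun i hi => ?_
      rw [← Finset.sum_add_distrib]
      exact Finset.sum_congr rfl fun j hj => d3 i hi j hj
    rw [Finset.sum_congr rfl d1, Finset.sum_add_distrib,
      sum_ad_ite_left k (fun _ => Pq (sq x)),
      Finset.sum_congr rfl d2, d3',
      US h2 hπk IH2 le_rfl x, if_pos rfl, hPq2 x]
    have goal' : ((Pq (sq x) + ⁅x, Pq x⁆ + Qf sq π k k x) + Pq (sq x))
        = ((∑ i ∈ range (k + 1), if 2 * i = k then sq (π i x) else 0) +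
            ((∑ i ∈ range (k + 1), ∑ j ∈ range (k + 1),
              if i < j ∧ i + j = k then ⁅π i x, π j x⁆ else 0) + ⁅x, Pq x⁆)) +
          (Pq (sq x) + Pq (sq x)) := by
      rw [Qf]
      abel
    rw [goal', h2, add_zero]
  · -- Eq3 at order k
    intro x
    have d1 : ∀ p ∈ antidiagonal k,
        (Function.update π k Pq) p.1 (Dd p.2 x)
        = π p.1 (Dd p.2 x) + (if p.1 = k then Pq (D x) else 0) := by
      intro p hp
      rw [Finset.HasAntidiagonal.mem_antidiagonal] at hp
      by_cases h : p.1 = k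
      · have hp2 : p.2 = 0 := by omega
        rw [if_pos h, h, hp2, Function.update_self, hπk, hDd0]
        simp
      · rw [Function.update_of_ne h, if_neg h, add_zero]
    rw [Finset.sum_congr rfl d1, Finset.sum_add_distrib,
      sum_ad_ite_left k (fun _ => Pq (D x)),
      UD hπk IH3 le_rfl x, if_pos rfl, hπk, Function.update_self]
    have h3 := hPq3 x
    rw [Ph1L_apply] at h3
    rw [h3]
    rw [LinearMap.zero_apply, map_zero, add_zero, add_assoc, h2, add_zero]

end KeyLemma

section Main

variable {F : Type*} [Field F] [CharP F 2]
variable {g : Type*} [LieRing g] [LieAlgebra F g]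
variable {sq : g → g} {D : g →ₗ[F] g}
variable {μ : ℕ → g → g → g} {σ : ℕ → g → g} {Dd : ℕ → g →ₗ[F] g}

lemma good_zero
    (hμ0 : ∀ x y : g, μ 0 x y = ⁅x, y⁆)
    (hσ0 : ∀ x : g, σ 0 x = sq x)
    (hDd0 : Dd 0 = D)
    (π : ℕ → g →ₗ[F] g) (hπ0 : π 0 = LinearMap.id) :
    Eq1 μ π 0 ∧ Eq2 sq σ π 0 ∧ Eq3 D Dd π 0 := by
  refine ⟨fun x y => ?_, fun x => ?_, fun x => ?_⟩
  · simp [Eq1, Finset.Nat.antidiagonal_zero, hπ0, hμ0]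
  · simp [Eq2, Finset.Nat.antidiagonal_zero, Finset.sum_range_one, hπ0, hσ0]
  · simp [Eq3, Finset.Nat.antidiagonal_zero, hπ0, hDd0]

end Main


/-- if every 2-cocycle of the ResLieDer pair `((g,[2]),D)` with adjoint
coefficients is a 2-coboundary, then `((g,[2]),D)` is rigid. -/
theorem stmt8
    {F : Type*} [Field F] [CharP F 2]
    {g : Type*} [LieRing g] [LieAlgebra F g]
    (sq : g → g)
    (hsq_ad : ∀ x y : g, ⁅sq x, y⁆ = ⁅x, ⁅x, y⁆⁆)
    (hsq_smul : ∀ (a : F) (x : g), sq (a • x) = a ^ 2 • sq x)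
    (hsq_add : ∀ x y : g, sq (x + y) = sq x + sq y + ⁅x, y⁆)
    (D : g →ₗ[F] g)
    (hD_br : ∀ x y : g, D ⁅x, y⁆ = ⁅D x, y⁆ + ⁅x, D y⁆)
    (hD_sq : ∀ x : g, D (sq x) = ⁅x, D x⁆)
    -- every 2-cocycle with adjoint coefficients is a 2-coboundary:
    (H2 : ∀ (φ₂ : g → g → g) (ω₂ : g → g) (φ₁ : g →ₗ[F] g),
      (∀ (a : F) (x x' y : g), φ₂ (a • x + x') y = a • φ₂ x y + φ₂ x' y) →
      (∀ (a : F) (x y y' : g), φ₂ x (a • y + y') = a • φ₂ x y + φ₂ x y') →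
      (∀ x : g, φ₂ x x = 0) →
      (∀ (a : F) (x : g), ω₂ (a • x) = a ^ 2 • ω₂ x) →
      (∀ x y : g, ω₂ (x + y) = ω₂ x + ω₂ y + φ₂ x y) →
      (∀ x y z : g,
        ⁅x, φ₂ y z⁆ + φ₂ ⁅y, z⁆ x + ⁅y, φ₂ z x⁆ + φ₂ ⁅z, x⁆ y +
          ⁅z, φ₂ x y⁆ + φ₂ ⁅x, y⁆ z = 0) →
      (∀ x y : g, ⁅x, φ₂ x y⁆ + φ₂ (sq x) y + φ₂ ⁅x, y⁆ x + ⁅y, ω₂ x⁆ = 0) →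
      (∀ x y : g,
        φ₁ ⁅x, y⁆ + ⁅x, φ₁ y⁆ + ⁅y, φ₁ x⁆ +
          φ₂ (D x) y + φ₂ x (D y) + D (φ₂ x y) = 0) →
      (∀ x : g, φ₁ (sq x) + ⁅x, φ₁ x⁆ + D (ω₂ x) + φ₂ x (D x) = 0) →
      ∃ π : g →ₗ[F] g,
        (∀ x y : g, φ₂ x y = π ⁅x, y⁆ + ⁅x, π y⁆ + ⁅y, π x⁆) ∧
        (∀ x : g, ω₂ x = π (sq x) + ⁅x, π x⁆) ∧
        (∀ x : g, φ₁ x = D (π x) + π (D x))) :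
    -- rigidity: every 1-parameter formal deformation is trivial
    ∀ (μ : ℕ → g → g → g) (σ : ℕ → g → g) (Dd : ℕ → g →ₗ[F] g),
      (∀ (i : ℕ) (a : F) (x x' y : g), μ i (a • x + x') y = a • μ i x y + μ i x' y) →
      (∀ (i : ℕ) (a : F) (x y y' : g), μ i x (a • y + y') = a • μ i x y + μ i x y') →
      (∀ (i : ℕ) (x : g), μ i x x = 0) →
      (∀ x y : g, μ 0 x y = ⁅x, y⁆) →
      (∀ x : g, σ 0 x = sq x) →
      (Dd 0 = D) →
      (∀ (i : ℕ) (a : F) (x : g), σ i (a • x) = a ^ 2 • σ i x) →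
      (∀ (i : ℕ) (x y : g), σ i (x + y) = σ i x + σ i y + μ i x y) →
      (∀ (k : ℕ) (x y z : g),
        ∑ p ∈ Finset.HasAntidiagonal.antidiagonal k,
          (μ p.1 x (μ p.2 y z) + μ p.1 y (μ p.2 z x) + μ p.1 z (μ p.2 x y)) = 0) →
      (∀ (k : ℕ) (x y : g),
        ∑ p ∈ Finset.HasAntidiagonal.antidiagonal k, (μ p.1 (σ p.2 x) y + μ p.1 x (μ p.2 x y)) = 0) →
      (∀ (k : ℕ) (x y : g),
        ∑ p ∈ Finset.HasAntidiagonal.antidiagonal k,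
          (Dd p.1 (μ p.2 x y) + μ p.2 (Dd p.1 x) y + μ p.2 x (Dd p.1 y)) = 0) →
      (∀ (k : ℕ) (x : g),
        ∑ p ∈ Finset.HasAntidiagonal.antidiagonal k, (Dd p.1 (σ p.2 x) + μ p.2 x (Dd p.1 x)) = 0) →
      ∃ π : ℕ → g →ₗ[F] g, π 0 = LinearMap.id ∧
        ∀ (k : ℕ) (x y : g),
          (∑ p ∈ Finset.HasAntidiagonal.antidiagonal k, π p.1 (μ p.2 x y) =
            ∑ p ∈ Finset.HasAntidiagonal.antidiagonal k, ⁅π p.1 x, π p.2 y⁆) ∧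
          (∑ p ∈ Finset.HasAntidiagonal.antidiagonal k, π p.1 (σ p.2 x) =
            (∑ i ∈ Finset.range (k + 1), if 2 * i = k then sq (π i x) else 0) +
              ∑ i ∈ Finset.range (k + 1), ∑ j ∈ Finset.range (k + 1),
                if i < j ∧ i + j = k then ⁅π i x, π j x⁆ else 0) ∧
          (∑ p ∈ Finset.HasAntidiagonal.antidiagonal k, π p.1 (Dd p.2 x) = D (π k x)) := by
  intro μ σ Dd hμl hμr hμalt hμ0 hσ0 hDd0 hσ_smul hσadd hJ hR hDL hDS
  have h2 : ∀ v : g, v + v = 0 := two_zero F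
  classical
  -- the Good predicate
  have hstep : ∀ (π : ℕ → g →ₗ[F] g) (n : ℕ),
      (π 0 = LinearMap.id ∧ ∀ m ≤ n, Eq1 μ π m ∧ Eq2 sq σ π m ∧ Eq3 D Dd π m) →
      ∃ q, ((Function.update π (n+1) q) 0 = LinearMap.id ∧
        ∀ m ≤ n + 1, Eq1 μ (Function.update π (n+1) q) m ∧
          Eq2 sq σ (Function.update π (n+1) q) m ∧
          Eq3 D Dd (Function.update π (n+1) q) m) := by
    intro π n hGood
    obtain ⟨hg0, hgm⟩ := hGood
    set π' := Function.update π (n+1) (0 : g →ₗ[F] g) with hπ'def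
    have hπ'0 : π' 0 = LinearMap.id := by
      rw [hπ'def, Function.update_of_ne (by omega : (0:ℕ) ≠ n + 1), hg0]
    have hπ'k : π' (n+1) = 0 := Function.update_self _ _ _
    have hagree : ∀ i ≤ n, π i = π' i := by
      intro i hi
      rw [hπ'def, Function.update_of_ne (by omega : i ≠ n + 1)]
    have hIH1 : ∀ m < n + 1, Eq1 μ π' m := fun m hm =>
      Eq1_congr (fun i hi => hagree i (by omega)) (hgm m (by omega)).1
    have hIH2 : ∀ m < n + 1, Eq2 sq σ π' m := fun m hm =>
      Eq2_congr (fun i hi => hagree i (by omega)) (hgm m (by omega)).2.1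
    have hIH3 : ∀ m < n + 1, Eq3 D Dd π' m := fun m hm =>
      Eq3_congr (fun i hi => hagree i (by omega)) (hgm m (by omega)).2.2
    obtain ⟨q, hq1, hq2, hq3⟩ :=
      key h2 hsq_ad hsq_smul hsq_add hD_br hD_sq H2 hμl hμr hμalt hμ0 hσ0 hDd0
        hσ_smul hσadd hJ hR hDL hDS (k := n + 1) (by omega) hπ'0 hπ'k hIH1 hIH2 hIH3
    have hupdup : Function.update π' (n+1) q = Function.update π (n+1) q := by
      rw [hπ'def, Function.update_idem]
    rw [hupdup] at hq1 hq2 hq3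
    refine ⟨q, ?_, ?_⟩
    · rw [Function.update_of_ne (by omega : (0:ℕ) ≠ n + 1), hg0]
    · intro m hm
      rcases Nat.lt_or_ge m (n + 1) with hlt | hge
      · have hag : ∀ i ≤ m, π i = Function.update π (n+1) q i := by
          intro i hi
          rw [Function.update_of_ne (by omega : i ≠ n + 1)]
        obtain ⟨e1, e2, e3⟩ := hgm m (by omega)
        exact ⟨Eq1_congr hag e1, Eq2_congr hag e2, Eq3_congr hag e3⟩
      · have : m = n + 1 := by omega
        subst this
        exact ⟨hq1, hq2, hq3⟩
  choose nextq hnextq using hstep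
  have base : ((fun _ => LinearMap.id : ℕ → g →ₗ[F] g) 0 = LinearMap.id ∧
      ∀ m ≤ 0, Eq1 μ (fun _ => (LinearMap.id : g →ₗ[F] g)) m ∧
        Eq2 sq σ (fun _ => (LinearMap.id : g →ₗ[F] g)) m ∧
        Eq3 D Dd (fun _ => (LinearMap.id : g →ₗ[F] g)) m) := by
    refine ⟨rfl, ?_⟩
    intro m hm
    have : m = 0 := by omega
    subst this
    exact good_zero hμ0 hσ0 hDd0 (fun _ => (LinearMap.id : g →ₗ[F] g)) rfl
  let chain : ∀ n : ℕ, {π : ℕ → g →ₗ[F] g //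
      π 0 = LinearMap.id ∧ ∀ m ≤ n, Eq1 μ π m ∧ Eq2 sq σ π m ∧ Eq3 D Dd π m} :=
    fun n => Nat.rec ⟨fun _ => LinearMap.id, base⟩
      (fun n ih => ⟨Function.update ih.1 (n+1) (nextq ih.1 n ih.2),
        hnextq ih.1 n ih.2⟩) n
  have chain_succ : ∀ n, (chain (n+1)).1 =
      Function.update (chain n).1 (n+1) (nextq (chain n).1 n (chain n).2) :=
    fun n => rfl
  have agree : ∀ n i, i ≤ n → (chain (n+1)).1 i = (chain n).1 i := by
    intro n i hi
    rw [chain_succ]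
    exact Function.update_of_ne (by omega) _ _
  have agree' : ∀ n m, n ≤ m → ∀ i, i ≤ n → (chain m).1 i = (chain n).1 i := by
    intro n m hnm
    induction hnm with
    | refl => intro i _; rfl
    | @step m' h ih =>
        intro i hi
        rw [agree m' i (le_trans hi h)]
        exact ih i hi
  refine ⟨fun i => (chain i).1 i, (chain 0).2.1, ?_⟩
  intro k x y
  have hg := (chain k).2.2 k le_rfl
  have hagree : ∀ i ≤ k, (chain k).1 i = (chain i).1 i := fun i hi =>
    agree' i k hi i le_rfl
  exact ⟨Eq1_congr hagree hg.1 x y, Eq2_congr hagree hg.2.1 x,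
    Eq3_congr hagree hg.2.2 x⟩
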